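/- Let ρ be a density matrix on ℋ_A ⊗ ℋ_B (both finite-dimensional complex Hilbert spaces) and suppose ρ has a symmetric extension ρ' on ℋ_A ⊗ ℋ_{B_1} ⊗ ... ⊗ ℋ_{B_m} (each ℋ_{B_i} = ℋ_B), i.e. for each i ∈ {1,...,m} the reduced density matrix of ρ' on ℋ_A ⊗ ℋ_{B_i}, obtained by tracing out all other B factors, equals ρ. Then for any finite family of POVMs {E^j_a}_a (j ranging over an arbitrary finite index set) on ℋ_A and any m POVMs {F^i_b}_b (i = 1,...,m) on ℋ_B, there exists a local hidden variable model reproducing the quantum statistics: a finite set Λ, a probability distribution p on Λ, and response functions P_A(a | j, λ) ∈ [0,1] with Σ_a P_A(a|j,λ) = 1 and P_B(b | i, λ) ∈ [0,1] with Σ_b P_B(b|i,λ) = 1, such that Tr(ρ (E^j_a ⊗ F^i_b)) = Σ_{λ∈Λ} p(λ) P_A(a|j,λ) P_B(b|i,λ) for all i, j, a, b. -/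

import Mathlib

open Matrix
open scoped Kronecker ComplexConjugate ComplexOrder

/-- A density matrix: positive semidefinite with trace 1. -/
def IsDensityMatrix {n : Type*} [Fintype n] [DecidableEq n] (ρ : Matrix n n ℂ) : Prop :=
  ρ.PosSemidef ∧ ρ.trace = 1

/-- A POVM: a finite family of positive semidefinite operators summing to the identity. -/
def IsPOVM {n O : Type*} [Fintype n] [DecidableEq n] [Fintype O]
    (E : O → Matrix n n ℂ) : Prop :=
  (∀ a, (E a).PosSemidef) ∧ ∑ a, E a = 1

/-- The reduced density matrix of a state on `ℋ_A ⊗ ℋ_B^{⊗m}` on the factors `ℋ_A ⊗ ℋ_{B_i}`,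
obtained by tracing out all the other `B` factors. -/
noncomputable def reducedAt {dA dB m : ℕ}
    (ρ' : Matrix (Fin dA × (Fin m → Fin dB)) (Fin dA × (Fin m → Fin dB)) ℂ)
    (i : Fin m) : Matrix (Fin dA × Fin dB) (Fin dA × Fin dB) ℂ :=
  Matrix.of fun p q => ∑ g : Fin m → Fin dB,
    if g i = p.2 then ρ' (p.1, g) (q.1, Function.update g i q.2) else 0

/-! ### Auxiliary lemmas -/

open scoped MatrixOrder in
lemma Matrix.posSemidef_iff_eq_transpose_mul_self {n : Type*} [Fintype n] [DecidableEq n]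
    {A : Matrix n n ℂ} : A.PosSemidef ↔ ∃ B : Matrix n n ℂ, A = Bᴴ * B := by
  constructor
  · intro hA
    exact CStarAlgebra.nonneg_iff_eq_star_mul_self.mp hA.nonneg
  · rintro ⟨B, rfl⟩
    exact posSemidef_conjTranspose_mul_self B

lemma LHV.psd_trace_nonneg {n : Type*} [Fintype n] [DecidableEq n]
    {A : Matrix n n ℂ} (hA : A.PosSemidef) : 0 ≤ A.trace := by
  refine Finset.sum_nonneg fun i _ => ?_
  have := hA.dotProduct_mulVec_nonneg (Pi.single i 1)
  simpa [dotProduct, mulVec, Pi.single_apply, Finset.sum_ite_eq] using this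

lemma LHV.trace_mul_psd_nonneg {n : Type*} [Fintype n] [DecidableEq n]
    {A B : Matrix n n ℂ} (hA : A.PosSemidef) (hB : B.PosSemidef) :
    0 ≤ (A * B).trace := by
  obtain ⟨C, rfl⟩ := posSemidef_iff_eq_transpose_mul_self.mp hB
  rw [← mul_assoc, trace_mul_cycle]
  exact LHV.psd_trace_nonneg (hA.mul_mul_conjTranspose_same C)

/-- The operator `G ⊗ F_1(lam 1) ⊗ ⋯ ⊗ F_m(lam m)` on `ℋ_A ⊗ ℋ_B^{⊗m}`. -/
noncomputable def LHV.EFgen {dA dB m : ℕ} {OB : Type} [Fintype OB]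
    (F : Fin m → OB → Matrix (Fin dB) (Fin dB) ℂ)
    (G : Matrix (Fin dA) (Fin dA) ℂ) (lam : Fin m → OB) :
    Matrix (Fin dA × (Fin m → Fin dB)) (Fin dA × (Fin m → Fin dB)) ℂ :=
  Matrix.of fun p q => G p.1 q.1 * ∏ k, F k (lam k) (p.2 k) (q.2 k)

namespace LHV

lemma EFgen_posSemidef {dA dB m : ℕ} {OB : Type} [Fintype OB]
    {F : Fin m → OB → Matrix (Fin dB) (Fin dB) ℂ}
    {G : Matrix (Fin dA) (Fin dA) ℂ} {lam : Fin m → OB}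
    (hG : G.PosSemidef) (hF : ∀ k, (F k (lam k)).PosSemidef) :
    (EFgen F G lam).PosSemidef := by
  obtain ⟨A, hA⟩ := posSemidef_iff_eq_transpose_mul_self.mp hG
  choose C hC using fun k => posSemidef_iff_eq_transpose_mul_self.mp (hF k)
  refine posSemidef_iff_eq_transpose_mul_self.mpr
    ⟨Matrix.of fun p q => A p.1 q.1 * ∏ k, C k (p.2 k) (q.2 k), ?_⟩
  ext p q
  simp only [EFgen, Matrix.of_apply, Matrix.mul_apply, Matrix.conjTranspose_apply,
    Matrix.of_apply, hA, hC, star_mul', Fintype.sum_prod_type]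
  rw [Fintype.prod_sum, Finset.sum_mul_sum]
  refine Finset.sum_congr rfl fun z _ => Finset.sum_congr rfl fun f _ => ?_
  rw [Finset.prod_mul_distrib, star_prod]
  ring

variable {dA dB m : ℕ} {OA OB : Type} [Fintype OA] [Fintype OB]
  {F : Fin m → OB → Matrix (Fin dB) (Fin dB) ℂ}

lemma EFgen_sumG (lam : Fin m → OB) (Es : OA → Matrix (Fin dA) (Fin dA) ℂ) :
    ∑ a, EFgen F (Es a) lam = EFgen F (∑ a, Es a) lam := by
  ext p q
  simp [EFgen, Matrix.sum_apply, Finset.sum_mul]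

lemma EFgen_sum_lam (hF : ∀ k, ∑ b, F k b = 1) :
    ∑ lam : Fin m → OB, EFgen F (1 : Matrix (Fin dA) (Fin dA) ℂ) lam = 1 := by
  ext p q
  simp only [Matrix.sum_apply, EFgen, Matrix.of_apply]
  rw [← Finset.mul_sum,
    ← Fintype.prod_sum (fun (k : Fin m) (b : OB) => F k b (p.2 k) (q.2 k))]
  have h1 : ∀ k, ∑ b, F k b (p.2 k) (q.2 k)
      = (1 : Matrix (Fin dB) (Fin dB) ℂ) (p.2 k) (q.2 k) := fun k => by
    rw [← hF k]; simp [Matrix.sum_apply]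
  simp only [h1, Matrix.one_apply]
  rw [Finset.prod_boole]
  by_cases h1 : p.1 = q.1 <;> by_cases h2 : ∀ i ∈ Finset.univ, p.2 i = q.2 i <;>
    simp_all [Prod.ext_iff, funext_iff]

lemma sum_erase_delta (i : Fin m) (g : Fin m → Fin dB) (t : (Fin m → Fin dB) → ℂ) :
    ∑ h : Fin m → Fin dB,
      (∏ k ∈ Finset.univ.erase i, if h k = g k then (1:ℂ) else 0) * t h
      = ∑ v, t (Function.update g i v) := by
  have key : ∀ h : Fin m → Fin dB,
      (∏ k ∈ Finset.univ.erase i, if h k = g k then (1:ℂ) else 0)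
      = ∑ v, if h = Function.update g i v then (1:ℂ) else 0 := by
    intro h
    have hcond : ∀ v, (h = Function.update g i v) → v = h i := by
      intro v hv
      have hv2 : h i = v := by rw [hv, Function.update_self]
      exact hv2.symm
    have hiff : (∀ k ∈ Finset.univ.erase i, h k = g k)
        ↔ h = Function.update g i (h i) := by
      constructor
      · intro hh; funext k
        by_cases hk : k = i
        · subst hk; simp
        · rw [Function.update_of_ne hk]
          exact hh k (Finset.mem_erase.mpr ⟨hk, Finset.mem_univ _⟩)
      · intro hh k hk
        rw [Finset.mem_erase] at hk
        conv_lhs => rw [hh]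
        rw [Function.update_of_ne hk.1]
    rw [Finset.prod_boole]
    by_cases hA : h = Function.update g i (h i)
    · rw [if_pos (hiff.mpr hA), Finset.sum_eq_single (h i)]
      · rw [if_pos hA]
      · intro v _ hv
        exact if_neg fun hc => hv (hcond v hc)
      · intro hmem; exact absurd (Finset.mem_univ _) hmem
    · rw [if_neg fun hc => hA (hiff.mp hc)]
      symm
      apply Finset.sum_eq_zero
      intro v _
      refine if_neg fun hc => hA ?_
      have := hcond v hc
      rw [← this]; exact hc
  simp_rw [key, Finset.sum_mul]
  rw [Finset.sum_comm]
  refine Finset.sum_congr rfl fun v _ => ?_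
  simp_rw [ite_mul, one_mul, zero_mul]
  simpa using Finset.sum_ite_eq' Finset.univ (Function.update g i v) t

variable [DecidableEq OB]

lemma sum_lam_fixed (hF : ∀ k, ∑ b, F k b = 1) (i : Fin m) (b : OB)
    (q2 p2 : Fin m → Fin dB) :
    ∑ lam : Fin m → OB, (if lam i = b then ∏ k, F k (lam k) (q2 k) (p2 k) else 0)
      = F i b (q2 i) (p2 i)
        * ∏ k ∈ Finset.univ.erase i, (if q2 k = p2 k then (1:ℂ) else 0) := by
  have step1 : ∀ lam : Fin m → OB,
      (if lam i = b then ∏ k, F k (lam k) (q2 k) (p2 k) else 0)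
      = ∏ k, (if k = i then (if lam k = b then F i b (q2 i) (p2 i) else 0)
              else F k (lam k) (q2 k) (p2 k)) := by
    intro lam
    by_cases hl : lam i = b
    · rw [if_pos hl]
      conv_rhs => rw [← Finset.mul_prod_erase Finset.univ _ (Finset.mem_univ i)]
      rw [if_pos rfl, if_pos hl]
      conv_lhs => rw [← Finset.mul_prod_erase Finset.univ _ (Finset.mem_univ i)]
      rw [hl]
      exact congrArg _ (Finset.prod_congr rfl fun k hk =>
        (if_neg (Finset.mem_erase.mp hk).1).symm)
    · rw [if_neg hl]
      symm
      apply Finset.prod_eq_zero (Finset.mem_univ i)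
      rw [if_pos rfl, if_neg hl]
  simp_rw [step1]
  rw [← Fintype.prod_sum (fun (k : Fin m) (c : OB) =>
    if k = i then (if c = b then F i b (q2 i) (p2 i) else 0) else F k c (q2 k) (p2 k))]
  conv_lhs => rw [← Finset.mul_prod_erase Finset.univ _ (Finset.mem_univ i)]
  congr 1
  · simp
  · refine Finset.prod_congr rfl fun k hk => ?_
    rw [Finset.sum_congr rfl fun c _ => if_neg (Finset.mem_erase.mp hk).1]
    have h1 : ∑ c, F k c (q2 k) (p2 k)
        = (1 : Matrix (Fin dB) (Fin dB) ℂ) (q2 k) (p2 k) := by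
      rw [← hF k]; simp [Matrix.sum_apply]
    rw [h1, Matrix.one_apply]

lemma trace_mul_expand {X : Type*} [Fintype X] (M N : Matrix X X ℂ) :
    (M * N).trace = ∑ p, ∑ q, M p q * N q p := by
  simp [Matrix.trace, Matrix.diag, Matrix.mul_apply]

lemma sum_swap4 {α β γ δ : Type*} [Fintype α] [Fintype β] [Fintype γ] [Fintype δ]
    (f : α → β → γ → δ → ℂ) :
    ∑ u : α, ∑ y : β, ∑ v : γ, ∑ g : δ, f u y v g
      = ∑ g : δ, ∑ y : β, ∑ v : γ, ∑ u : α, f u y v g := by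
  simp only [← Fintype.sum_prod_type']
  exact Fintype.sum_equiv
    ⟨fun p => (p.2.2.2, p.2.1, p.2.2.1, p.1), fun p => (p.2.2.2, p.2.1, p.2.2.1, p.1),
      fun p => rfl, fun p => rfl⟩ _ _ (fun p => rfl)

lemma key_trace (ρ' : Matrix (Fin dA × (Fin m → Fin dB)) (Fin dA × (Fin m → Fin dB)) ℂ)
    (hF : ∀ k, ∑ b, F k b = 1) (G : Matrix (Fin dA) (Fin dA) ℂ) (i : Fin m) (b : OB) :
    ∑ lam : Fin m → OB, (if lam i = b then (ρ' * EFgen F G lam).trace else 0)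
      = (reducedAt ρ' i * (G ⊗ₖ F i b)).trace := by
  have MIDdef : (reducedAt ρ' i * (G ⊗ₖ F i b)).trace
      = ∑ x : Fin dA, ∑ g : Fin m → Fin dB, ∑ y : Fin dA, ∑ v : Fin dB,
          ρ' (x, g) (y, Function.update g i v) * G y x * F i b v (g i) := by
    rw [trace_mul_expand, Fintype.sum_prod_type]
    refine Finset.sum_congr rfl fun x _ => ?_
    simp only [Fintype.sum_prod_type, reducedAt, Matrix.of_apply, kroneckerMap_apply,
      Finset.sum_mul, ite_mul, zero_mul]
    rw [sum_swap4 (fun u y v g =>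
      if g i = u then ρ' (x, g) (y, Function.update g i v) * (G y x * F i b v u) else 0)]
    refine Finset.sum_congr rfl fun g _ => Finset.sum_congr rfl fun y _ =>
      Finset.sum_congr rfl fun v _ => ?_
    rw [Finset.sum_ite_eq Finset.univ (g i)
      (fun u => ρ' (x, g) (y, Function.update g i v) * (G y x * F i b v u))]
    simp [mul_assoc]
  rw [MIDdef]
  have pushite : ∀ lam : Fin m → OB,
      (if lam i = b then (ρ' * EFgen F G lam).trace else 0)
      = ∑ x : Fin dA, ∑ g : Fin m → Fin dB, ∑ y : Fin dA, ∑ h : Fin m → Fin dB,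
          (if lam i = b then
            ρ' (x, g) (y, h) * (G y x * ∏ k, F k (lam k) (h k) (g k)) else 0) := by
    intro lam
    by_cases hl : lam i = b
    · simp only [if_pos hl, trace_mul_expand, Fintype.sum_prod_type, EFgen, Matrix.of_apply]
    · simp [if_neg hl]
  rw [Finset.sum_congr rfl fun lam _ => pushite lam]
  rw [Finset.sum_comm]
  refine Finset.sum_congr rfl fun x _ => ?_
  rw [Finset.sum_comm]
  refine Finset.sum_congr rfl fun g _ => ?_
  rw [Finset.sum_comm]
  refine Finset.sum_congr rfl fun y _ => ?_
  rw [Finset.sum_comm]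
  have inner : ∀ h : Fin m → Fin dB,
      (∑ lam : Fin m → OB,
        if lam i = b then ρ' (x, g) (y, h) * (G y x * ∏ k, F k (lam k) (h k) (g k)) else 0)
      = (∏ k ∈ Finset.univ.erase i, if h k = g k then (1:ℂ) else 0)
          * (ρ' (x, g) (y, h) * G y x * F i b (h i) (g i)) := by
    intro h
    have step : ∀ lam : Fin m → OB,
        (if lam i = b then ρ' (x, g) (y, h) * (G y x * ∏ k, F k (lam k) (h k) (g k)) else 0)
        = (ρ' (x, g) (y, h) * G y x)
            * (if lam i = b then ∏ k, F k (lam k) (h k) (g k) else 0) := by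
      intro lam; split <;> ring
    rw [Finset.sum_congr rfl fun lam _ => step lam, ← Finset.mul_sum,
      sum_lam_fixed hF i b h g]
    ring
  rw [Finset.sum_congr rfl fun h _ => inner h,
    sum_erase_delta i g (fun h => ρ' (x, g) (y, h) * G y x * F i b (h i) (g i))]
  refine Finset.sum_congr rfl fun v _ => ?_
  rw [Function.update_self]

end LHV

/-- **Theorem 1.** If `ρ` has a symmetric extension `ρ'` to `ℋ_A ⊗ ℋ_{B_1} ⊗ ⋯ ⊗ ℋ_{B_m}`,
then there is a local hidden variable model reproducing the statistics of an arbitrary finite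
family of POVMs on Alice's side together with `m` POVMs on Bob's side. -/
theorem symmetric_extension_implies_lhv
    {dA dB m : ℕ} {J OA OB : Type} [Fintype J] [Fintype OA] [Fintype OB]
    (ρ : Matrix (Fin dA × Fin dB) (Fin dA × Fin dB) ℂ) (hρ : IsDensityMatrix ρ)
    (ρ' : Matrix (Fin dA × (Fin m → Fin dB)) (Fin dA × (Fin m → Fin dB)) ℂ)
    (hρ' : IsDensityMatrix ρ')
    (hext : ∀ i : Fin m, reducedAt ρ' i = ρ)
    (E : J → OA → Matrix (Fin dA) (Fin dA) ℂ) (hE : ∀ j, IsPOVM (E j))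
    (F : Fin m → OB → Matrix (Fin dB) (Fin dB) ℂ) (hF : ∀ i, IsPOVM (F i)) :
    ∃ (N : ℕ) (p : Fin N → ℝ) (PA : J → OA → Fin N → ℝ) (PB : Fin m → OB → Fin N → ℝ),
      (∀ l, 0 ≤ p l) ∧ (∑ l, p l = 1) ∧
      (∀ j a l, 0 ≤ PA j a l ∧ PA j a l ≤ 1) ∧
      (∀ j l, ∑ a, PA j a l = 1) ∧
      (∀ i b l, 0 ≤ PB i b l ∧ PB i b l ≤ 1) ∧
      (∀ i l, ∑ b, PB i b l = 1) ∧
      (∀ (j : J) (i : Fin m) (a : OA) (b : OB),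
        (ρ * (E j a ⊗ₖ F i b)).trace = ((∑ l, p l * PA j a l * PB i b l : ℝ) : ℂ)) := by
  classical
  obtain ⟨hρ'psd, hρ'tr⟩ := hρ'
  -- basic nonemptiness facts
  have hOA : J → Nonempty OA := by
    intro j
    by_contra hempty
    rw [not_nonempty_iff] at hempty
    have hne : Nonempty (Fin dA × Fin dB) := by
      by_contra hne
      rw [not_nonempty_iff] at hne
      have := hρ.2
      rw [Matrix.trace] at this
      simp [Finset.univ_eq_empty] at this
    obtain ⟨x, _⟩ := hne.some
    have h2 := (hE j).2
    rw [Finset.univ_eq_empty, Finset.sum_empty] at h2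
    have := congrFun (congrFun h2 x) x
    simp [Matrix.one_apply] at this
  -- the complex quantities
  set Q : J → OA → (Fin m → OB) → ℂ :=
    fun j a lam => (ρ' * LHV.EFgen F (E j a) lam).trace with hQdef
  set P : (Fin m → OB) → ℂ :=
    fun lam => (ρ' * LHV.EFgen F (1 : Matrix (Fin dA) (Fin dA) ℂ) lam).trace with hPdef
  have hQpos : ∀ j a lam, 0 ≤ Q j a lam := fun j a lam =>
    LHV.trace_mul_psd_nonneg hρ'psd
      (LHV.EFgen_posSemidef ((hE j).1 a) (fun k => (hF k).1 (lam k)))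
  have hPpos : ∀ lam, 0 ≤ P lam := fun lam =>
    LHV.trace_mul_psd_nonneg hρ'psd
      (LHV.EFgen_posSemidef Matrix.PosSemidef.one (fun k => (hF k).1 (lam k)))
  have hQsum : ∀ j lam, ∑ a, Q j a lam = P lam := by
    intro j lam
    simp only [hQdef, hPdef]
    rw [← Matrix.trace_sum, ← Finset.mul_sum, LHV.EFgen_sumG lam (fun a => E j a), (hE j).2]
  have hPsum : ∑ lam, P lam = 1 := by
    simp only [hPdef]
    rw [← Matrix.trace_sum, ← Finset.mul_sum, LHV.EFgen_sum_lam (fun k => (hF k).2),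
      mul_one, hρ'tr]
  have hkey : ∀ (j : J) (i : Fin m) (a : OA) (b : OB),
      ∑ lam : Fin m → OB, (if lam i = b then Q j a lam else 0)
        = (ρ * (E j a ⊗ₖ F i b)).trace := by
    intro j i a b
    rw [← hext i]
    exact LHV.key_trace ρ' (fun k => (hF k).2) (E j a) i b
  -- real parts
  have hreal : ∀ z : ℂ, 0 ≤ z → z = (z.re : ℂ) := by
    intro z hz
    rw [Complex.le_def] at hz
    apply Complex.ext <;> simp [← hz.2]
  have hQre : ∀ j a lam, 0 ≤ (Q j a lam).re := fun j a lam =>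
    (Complex.le_def.mp (hQpos j a lam)).1
  have hPre : ∀ lam, 0 ≤ (P lam).re := fun lam => (Complex.le_def.mp (hPpos lam)).1
  have hQPre : ∀ j lam, ∑ a, (Q j a lam).re = (P lam).re := by
    intro j lam
    rw [← Complex.re_sum, hQsum j lam]
  have hQle : ∀ j a lam, (Q j a lam).re ≤ (P lam).re := by
    intro j a lam
    rw [← hQPre j lam]
    exact Finset.single_le_sum (fun a' _ => hQre j a' lam) (Finset.mem_univ a)
  -- the hidden variable space
  set e : Fin (Fintype.card (Fin m → OB)) ≃ (Fin m → OB) :=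
    (Fintype.equivFin (Fin m → OB)).symm with hedef
  refine ⟨Fintype.card (Fin m → OB),
    fun l => (P (e l)).re,
    fun j a l => if (P (e l)).re = 0 then (Fintype.card OA : ℝ)⁻¹
      else (Q j a (e l)).re / (P (e l)).re,
    fun i b l => if (e l) i = b then 1 else 0,
    fun l => hPre (e l), ?_, ?_, ?_, ?_, ?_, ?_⟩
  · rw [Equiv.sum_comp e (fun lam => (P lam).re), ← Complex.re_sum, hPsum]
    simp
  · intro j a l
    dsimp only
    by_cases hp : (P (e l)).re = 0
    · rw [if_pos hp]
      constructor
      · positivity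
      · have hcard : 1 ≤ (Fintype.card OA : ℝ) := by
          have := Fintype.card_pos_iff.mpr (hOA j)
          exact_mod_cast this
        rw [inv_le_one_iff₀]
        right; exact hcard
    · rw [if_neg hp]
      have hppos : 0 < (P (e l)).re := lt_of_le_of_ne (hPre (e l)) (Ne.symm hp)
      constructor
      · exact div_nonneg (hQre j a (e l)) (hPre (e l))
      · rw [div_le_one hppos]
        exact hQle j a (e l)
  · intro j l
    dsimp only
    by_cases hp : (P (e l)).re = 0
    · simp only [if_pos hp, Finset.sum_const]
      have hcard : (Fintype.card OA : ℝ) ≠ 0 := by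
        have := Fintype.card_pos_iff.mpr (hOA j)
        positivity
      rw [nsmul_eq_mul, Finset.card_univ, mul_inv_cancel₀ hcard]
    · simp only [if_neg hp]
      rw [← Finset.sum_div, hQPre j (e l), div_self hp]
  · intro i b l
    dsimp only
    by_cases hb : e l i = b <;> simp [hb]
  · intro i l
    simp
  · intro j i a b
    rw [← hkey j i a b]
    push_cast
    rw [← Equiv.sum_comp e (fun lam => if lam i = b then Q j a lam else 0)]
    refine Finset.sum_congr rfl fun l _ => ?_
    by_cases hb : e l i = b
    · rw [if_pos hb, if_pos hb, Complex.ofReal_one, mul_one]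
      by_cases hp : (P (e l)).re = 0
      · rw [if_pos hp, hp]
        have hq : (Q j a (e l)).re = 0 :=
          le_antisymm (hp ▸ hQle j a (e l)) (hQre j a (e l))
        rw [hreal _ (hQpos j a (e l)), hq]
        simp
      · rw [if_neg hp]
        rw [mul_comm, ← Complex.ofReal_mul, div_mul_cancel₀ _ hp]
        exact hreal _ (hQpos j a (e l))
    · rw [if_neg hb, if_neg hb, Complex.ofReal_zero, mul_zero]
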